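/- For an integer r ≥ 1, let W_r be the ℚ-vector space with basis {ω_{ij} : 1 ≤ i ≤ j ≤ r}, indexed by unordered pairs (with repetition allowed) of elements of {1,…,r}; write ω_{ji} = ω_{ij}. Define elements E_{ij} ∈ W_r for 0 ≤ i < j ≤ r by E_{ij} = 2ω_{ij} − ω_{ii} − ω_{jj} for 1 ≤ i < j ≤ r, and E_{0i} = −ω_{ii} for 1 ≤ i ≤ r; write E_{ji} = E_{ij}. Since {E_{ij} : 0 ≤ i < j ≤ r} is a basis of W_r, there is a unique linear action ρ of the symmetric group Sym({0,1,…,r}) on W_r satisfying ρ(σ)E_{ij} = E_{σ(i)σ(j)} for all σ and all 0 ≤ i < j ≤ r. Then: (a) for every σ ∈ Sym({0,…,r}) with σ(0) = 0, one has ρ(σ)ω_{ij} = ω_{σ(i)σ(j)} for all 1 ≤ i ≤ j ≤ r; and (b) for the transposition τ = (0 1) and all 1 ≤ i ≤ j ≤ r: ρ(τ)ω_{ij} = ω_{ij} − ω_{1i} − ω_{1j} + ω_{11} if i ≥ 2; ρ(τ)ω_{1j} = −ω_{1j} + ω_{11} if j ≥ 2; and ρ(τ)ω_{11} = ω_{11}.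 -/
import Mathlib


/--
Let `W` be a ℚ-vector space with basis `{ω i j : 1 ≤ i ≤ j ≤ r}`
(indices in `{0,…,r}`, i.e. `Fin (r+1)`, with `ω j i = ω i j`), and let
`E i j = 2 ω i j − ω i i − ω j j` for `1 ≤ i < j ≤ r`, `E 0 i = −ω i i` for
`1 ≤ i ≤ r`, `E j i = E i j`.  Let `ρ` assign to each permutation `σ` of `{0,…,r}` a
linear endomorphism of `W` with `ρ σ (E i j) = E (σ i) (σ j)` for all `i < j` (the
unique linear action with this property).  Then:
(a) if `σ 0 = 0` then `ρ σ (ω i j) = ω (σ i) (σ j)` for all `1 ≤ i ≤ j ≤ r`; and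
(b) for the transposition `τ = (0 1)`:
    `ρ τ (ω i j) = ω i j − ω 1 i − ω 1 j + ω 1 1` for `2 ≤ i ≤ j ≤ r`,
    `ρ τ (ω 1 j) = −ω 1 j + ω 1 1` for `2 ≤ j ≤ r`, and
    `ρ τ (ω 1 1) = ω 1 1`.
-/
theorem cyclic_action_on_omega_basis
    (r : ℕ) (hr : 1 ≤ r)
    (W : Type) [AddCommGroup W] [Module ℚ W]
    (ω : Fin (r + 1) → Fin (r + 1) → W)
    (hωsymm : ∀ i j, ω i j = ω j i)
    (hω_indep : LinearIndependent ℚ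
      (fun p : {p : Fin (r + 1) × Fin (r + 1) // 0 < p.1 ∧ p.1 ≤ p.2} =>
        ω p.val.1 p.val.2))
    (hω_span : Submodule.span ℚ
      (Set.range (fun p : {p : Fin (r + 1) × Fin (r + 1) // 0 < p.1 ∧ p.1 ≤ p.2} =>
        ω p.val.1 p.val.2)) = ⊤)
    (E : Fin (r + 1) → Fin (r + 1) → W)
    (hEsymm : ∀ i j, E i j = E j i)
    (hE0 : ∀ i : Fin (r + 1), 0 < i → E 0 i = -ω i i)
    (hE : ∀ i j : Fin (r + 1), 0 < i → i < j →
      E i j = (2 : ℚ) • ω i j - ω i i - ω j j)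
    (ρ : Equiv.Perm (Fin (r + 1)) → (W →ₗ[ℚ] W))
    (hρ : ∀ (σ : Equiv.Perm (Fin (r + 1))) (i j : Fin (r + 1)), i < j →
      ρ σ (E i j) = E (σ i) (σ j)) :
    (∀ σ : Equiv.Perm (Fin (r + 1)), σ 0 = 0 →
      ∀ i j : Fin (r + 1), 0 < i → i ≤ j → ρ σ (ω i j) = ω (σ i) (σ j)) ∧
    (∀ i j : Fin (r + 1), 1 < i → i ≤ j →
      ρ (Equiv.swap 0 1) (ω i j) = ω i j - ω 1 i - ω 1 j + ω 1 1) ∧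
    (∀ j : Fin (r + 1), 1 < j →
      ρ (Equiv.swap 0 1) (ω 1 j) = -ω 1 j + ω 1 1) ∧
    (ρ (Equiv.swap 0 1) (ω 1 1) = ω 1 1) := by
  have h2 : (1 : ℕ) < r + 1 := by omega
  have h01 : (0 : Fin (r + 1)) < 1 := by
    rw [Fin.lt_def]
    simp [Fin.val_one', Nat.mod_eq_of_lt h2]
  have hρ' : ∀ (σ : Equiv.Perm (Fin (r + 1))) (i j : Fin (r + 1)), i ≠ j →
      ρ σ (E i j) = E (σ i) (σ j) := by
    intro σ i j hij
    rcases lt_or_gt_of_ne hij with h | h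
    · exact hρ σ i j h
    · rw [hEsymm, hρ σ j i h, hEsymm]
  have hωdiag : ∀ (σ : Equiv.Perm (Fin (r + 1))) (i : Fin (r + 1)), 0 < i →
      ρ σ (ω i i) = -E (σ 0) (σ i) := by
    intro σ i hi
    have h : ω i i = -E 0 i := by rw [hE0 i hi, neg_neg]
    rw [h, map_neg, hρ' σ 0 i hi.ne]
  have hωoff : ∀ (σ : Equiv.Perm (Fin (r + 1))) (i j : Fin (r + 1)), 0 < i → i < j →
      ρ σ (ω i j) = (2 : ℚ)⁻¹ • (E (σ i) (σ j) - E (σ 0) (σ i) - E (σ 0) (σ j)) := by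
    intro σ i j hi hij
    have hj : 0 < j := lt_trans hi hij
    have h : ω i j = (2 : ℚ)⁻¹ • (E i j - E 0 i - E 0 j) := by
      rw [hE i j hi hij, hE0 i hi, hE0 j hj]; module
    rw [h, map_smul, map_sub, map_sub, hρ σ i j hij, hρ' σ 0 i hi.ne, hρ' σ 0 j hj.ne]
  have hτ0 : Equiv.swap (0 : Fin (r + 1)) 1 0 = 1 := Equiv.swap_apply_left 0 1
  have hτ1 : Equiv.swap (0 : Fin (r + 1)) 1 1 = 0 := Equiv.swap_apply_right 0 1
  have hτk : ∀ k : Fin (r + 1), 1 < k → Equiv.swap (0 : Fin (r + 1)) 1 k = k := by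
    intro k hk
    exact Equiv.swap_apply_of_ne_of_ne (lt_trans h01 hk).ne' hk.ne'
  refine ⟨?_, ?_, ?_, ?_⟩
  · intro σ hσ0 i j hi hij
    have hσne : ∀ k : Fin (r + 1), 0 < k → 0 < σ k := by
      intro k hk
      rw [Fin.pos_iff_ne_zero]
      intro h
      exact hk.ne' (σ.injective (h.trans hσ0.symm))
    rcases eq_or_lt_of_le hij with rfl | hlt
    · rw [hωdiag σ i hi, hσ0, hE0 (σ i) (hσne i hi), neg_neg]
    · rw [hωoff σ i j hi hlt, hσ0]
      have hσi := hσne i hi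
      have hσj := hσne j (lt_trans hi hlt)
      have hne : σ i ≠ σ j := fun h => hlt.ne (σ.injective h)
      rcases lt_or_gt_of_ne hne with h | h
      · rw [hE _ _ hσi h, hE0 _ hσi, hE0 _ hσj]; module
      · rw [hEsymm (σ i) (σ j), hE _ _ hσj h, hE0 _ hσi, hE0 _ hσj,
          hωsymm (σ j) (σ i)]; module
  · intro i j hi hij
    have hi0 : 0 < i := lt_trans h01 hi
    rcases eq_or_lt_of_le hij with rfl | hlt
    · rw [hωdiag _ i hi0, hτ0, hτk i hi, hE 1 i h01 hi]; module
    · have hj : 1 < j := lt_trans hi hlt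
      rw [hωoff _ i j hi0 hlt, hτ0, hτk i hi, hτk j hj,
        hE i j hi0 hlt, hE 1 i h01 hi, hE 1 j h01 hj]
      module
  · intro j hj
    have hj0 : 0 < j := lt_trans h01 hj
    rw [hωoff _ 1 j h01 hj, hτ0, hτ1, hτk j hj, hE0 j hj0,
      hEsymm 1 0, hE0 1 h01, hE 1 j h01 hj]
    module
  · rw [hωdiag _ 1 h01, hτ0, hτ1, hEsymm 1 0, hE0 1 h01, neg_neg]
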